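/- For a positive definite Hermitian matrix X with tr(X) = 1 and Hermitian V, if V + τ(log X + I) = -κ I for some real κ and τ > 0, then X = exp(-V/τ) / tr[exp(-V/τ)] up to the constraint normalization; conversely, X* = exp(Y*)/tr[exp(Y*)] with τY* = -V* satisfies V* + τ log X* = -τ log tr[exp(-V*/τ)] · I. -/

import Mathlib

open Matrix
open scoped ComplexOrder

/-- The matrix logarithm of a Hermitian (positive definite) matrix, defined via the
spectral decomposition: `log X = U diag(log λᵢ) U†`. -/
noncomputable def hermLog {M : ℕ} {X : Matrix (Fin M) (Fin M) ℂ} (hX : X.IsHermitian) :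
    Matrix (Fin M) (Fin M) ℂ :=
  (hX.eigenvectorUnitary : Matrix (Fin M) (Fin M) ℂ) *
    Matrix.diagonal (fun i => ((Real.log (hX.eigenvalues i) : ℝ) : ℂ)) *
      (star (hX.eigenvectorUnitary : Matrix (Fin M) (Fin M) ℂ))

open scoped Matrix.Norms.L2Operator

lemma hermLog_eq_cfc {M : ℕ} {X : Matrix (Fin M) (Fin M) ℂ} (hX : X.IsHermitian) :
    hermLog hX = cfc Real.log X := by
  rw [hX.cfc_eq]
  rfl

lemma exp_eq_cfc {M : ℕ} {A : Matrix (Fin M) (Fin M) ℂ} (hA : A.IsHermitian) :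
    NormedSpace.exp A = cfc Real.exp A := by
  rw [← CFC.real_exp_eq_normedSpace_exp hA]

lemma trace_cfc' {M : ℕ} {A : Matrix (Fin M) (Fin M) ℂ} (hA : A.IsHermitian) (f : ℝ → ℝ) :
    Matrix.trace (hA.cfc f) = ((∑ i, f (hA.eigenvalues i) : ℝ) : ℂ) := by
  rw [Matrix.IsHermitian.cfc, Unitary.conjStarAlgAut_apply, Matrix.trace_mul_cycle,
    Unitary.star_mul_self_of_mem (SetLike.coe_mem hA.eigenvectorUnitary), Matrix.one_mul,
    Matrix.trace_diagonal]
  push_cast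
  rfl

lemma spectrum_pos_of_posDef {M : ℕ} {X : Matrix (Fin M) (Fin M) ℂ} (hX : X.IsHermitian)
    (hpd : X.PosDef) : ∀ x ∈ spectrum ℝ X, 0 < x := by
  intro x hx
  rw [hX.spectrum_real_eq_range_eigenvalues] at hx
  obtain ⟨i, rfl⟩ := hx
  exact hpd.eigenvalues_pos i

/-- fixed points of discounted exponential learning.
(a) If `X` is Hermitian positive definite with unit trace and
`V + τ(log X + I) = -κ I`, then `X = exp(-V/τ)/tr[exp(-V/τ)]`.
(b) Conversely, `X* = exp(Y*)/tr[exp(Y*)]` with `τ Y* = -V*` satisfies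
`V* + τ log X* = -τ log tr[exp(-V*/τ)] · I`. -/
theorem dxl_fixed_point_characterization {M : ℕ} (τ : ℝ) (hτ : 0 < τ) :
    (∀ (X V : Matrix (Fin M) (Fin M) ℂ) (hX : X.IsHermitian) (_ : V.IsHermitian)
        (_ : X.PosDef) (_ : X.trace = 1) (κ : ℝ),
      V + (τ : ℂ) • (hermLog hX + 1) = -(κ : ℂ) • 1 →
        X = (Matrix.trace (NormedSpace.exp ((-(τ : ℂ))⁻¹ • V)))⁻¹ •
              NormedSpace.exp ((-(τ : ℂ))⁻¹ • V)) ∧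
    (∀ (Vs Ys Xs : Matrix (Fin M) (Fin M) ℂ) (_ : Vs.IsHermitian)
        (hXs : Xs.IsHermitian),
      (τ : ℂ) • Ys = -Vs →
      Xs = (Matrix.trace (NormedSpace.exp Ys))⁻¹ • NormedSpace.exp Ys →
        Vs + (τ : ℂ) • hermLog hXs =
          (-(τ * Real.log ((Matrix.trace (NormedSpace.exp ((-(τ : ℂ))⁻¹ • Vs))).re) : ℝ) : ℂ)
            • 1) := by
  have hτ0 : (τ : ℂ) ≠ 0 := by exact_mod_cast hτ.ne'
  constructor
  · intro X V hX hV hpd htr κ hyp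
    have hVeq : V = -(κ : ℂ) • 1 - (τ : ℂ) • (hermLog hX + 1) := eq_sub_of_add_eq hyp
    set c : ℝ := κ / τ + 1 with hc
    have hV2 : V = (-(τ : ℂ)) • (hermLog hX + (c : ℂ) • 1) := by
      rw [hVeq]
      match_scalars
      all_goals (try rw [hc]); all_goals (try push_cast); all_goals (try field_simp); all_goals (try ring)
    have hkey : (-(τ : ℂ))⁻¹ • V = hermLog hX + (c : ℂ) • 1 := by
      rw [hV2, inv_smul_smul₀ (neg_ne_zero.mpr hτ0)]
    have hL : IsSelfAdjoint (hermLog hX) := by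
      rw [hermLog_eq_cfc hX]; exact cfc_predicate _ X
    have hexpL : NormedSpace.exp (hermLog hX) = X := by
      rw [hermLog_eq_cfc hX, ← CFC.real_exp_eq_normedSpace_exp (cfc_predicate _ X)]
      refine (cfc_comp' Real.exp Real.log X Real.continuous_exp.continuousOn
          (Real.continuousOn_log.mono fun x hx => (spectrum_pos_of_posDef hX hpd x hx).ne') hX).symm.trans ?_
      conv_rhs => rw [← cfc_id (R := ℝ) X]
      exact cfc_congr fun x hx => Real.exp_log (spectrum_pos_of_posDef hX hpd x hx)
    have hcomm : Commute (hermLog hX) ((c : ℂ) • (1 : Matrix (Fin M) (Fin M) ℂ)) :=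
      (Commute.one_right (hermLog hX)).smul_right _
    have hexpc : NormedSpace.exp ((c : ℂ) • (1 : Matrix (Fin M) (Fin M) ℂ))
        = Complex.exp c • (1 : Matrix (Fin M) (Fin M) ℂ) := by
      have h1 : ((c : ℂ) • (1 : Matrix (Fin M) (Fin M) ℂ))
          = algebraMap ℂ (Matrix (Fin M) (Fin M) ℂ) (c : ℂ) := by
        rw [Algebra.algebraMap_eq_smul_one]
      rw [h1, ← NormedSpace.algebraMap_exp_comm, Algebra.algebraMap_eq_smul_one,
        Complex.exp_eq_exp_ℂ]
    have hexp : NormedSpace.exp ((-(τ : ℂ))⁻¹ • V) = Complex.exp c • X := by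
      rw [hkey, Matrix.exp_add_of_commute _ _ hcomm, hexpL, hexpc]
      rw [Matrix.mul_smul, Matrix.mul_one]
    rw [hexp, Matrix.trace_smul, htr, smul_eq_mul, mul_one, smul_smul,
      inv_mul_cancel₀ (Complex.exp_ne_zero _), one_smul]
  · intro Vs Ys Xs hVs hXs hYV hXdef
    have hYs : Ys.IsHermitian := by
      have : Ys = (-(τ : ℂ))⁻¹ • Vs := by
        have : Vs = -((τ : ℂ) • Ys) := by rw [hYV, neg_neg]
        rw [this]
        match_scalars
        field_simp
      rw [this]
      have hsa : IsSelfAdjoint Vs := hVs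
      have he : ((-(τ : ℂ))⁻¹) = ((((-τ)⁻¹ : ℝ)) : ℂ) := by push_cast; ring
      have hr : _root_.IsSelfAdjoint ((-(τ : ℂ))⁻¹) := by
        rw [he]; exact Complex.conj_ofReal _
      exact hr.smul hsa
    have hVsYs : (-(τ : ℂ))⁻¹ • Vs = Ys := by
      have h1 : Vs = -((τ : ℂ) • Ys) := by rw [hYV, neg_neg]
      rw [h1]; match_scalars; field_simp
    -- trace of exp Ys is a positive real number
    set T : ℝ := ∑ i, Real.exp (hYs.eigenvalues i) with hT
    have hE : NormedSpace.exp Ys = cfc Real.exp Ys := exp_eq_cfc hYs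
    have htrE : Matrix.trace (NormedSpace.exp Ys) = (T : ℂ) := by
      rw [hE, hYs.cfc_eq, trace_cfc']
    rcases Nat.eq_zero_or_pos M with hM | hM
    · subst hM
      apply Subsingleton.elim
    have hTpos : 0 < T := by
      haveI : NeZero M := ⟨hM.ne'⟩
      exact Finset.sum_pos (fun i _ => Real.exp_pos _) Finset.univ_nonempty
    -- spectrum of exp Ys is positive
    have hspec : ∀ x ∈ spectrum ℝ (NormedSpace.exp Ys), 0 < x := by
      intro x hx
      rw [hE, cfc_map_spectrum Real.exp Ys] at hx
      obtain ⟨y, -, rfl⟩ := hx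
      exact Real.exp_pos y
    have hEsa : IsSelfAdjoint (NormedSpace.exp Ys) := by
      rw [hE]; exact cfc_predicate _ Ys
    -- rewrite Xs as a real smul
    have hXdef' : Xs = T⁻¹ • NormedSpace.exp Ys := by
      rw [hXdef, htrE, ← Complex.ofReal_inv,
        show ((T⁻¹ : ℝ) : ℂ) = algebraMap ℝ ℂ T⁻¹ from rfl, algebraMap_smul]
    have hlogexp : CFC.log (NormedSpace.exp Ys) = Ys := by
      exact CFC.log_exp Ys hYs
    have hlog : hermLog hXs = ((Real.log T⁻¹ : ℝ) : ℂ) • 1 + Ys := by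
      rw [hermLog_eq_cfc hXs, show cfc Real.log Xs = CFC.log Xs from rfl, hXdef',
        CFC.log_smul (NormedSpace.exp Ys) (fun x hx => (hspec x hx).ne') (inv_pos.mpr hTpos).ne' hEsa, hlogexp]
      congr 1
      rw [Algebra.algebraMap_eq_smul_one,
        show ((Real.log T⁻¹ : ℝ) : ℂ) = algebraMap ℝ ℂ (Real.log T⁻¹) from rfl, algebraMap_smul]
    rw [hVsYs, htrE, Complex.ofReal_re, hlog, smul_add, hYV, Real.log_inv]
    push_cast
    module
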